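/- Fix K ≥ 2, real numbers β_2,…,β_K, and λ_2,…,λ_K ∈ (−1,1), and define γ(d) = Σ_{ℓ=2}^K β_ℓ² λ_ℓ^d for integers d ≥ 0. For each depth H ≥ 1, let T_H be the complete binary tree with n = 2^{H+1} − 1 vertices, and let Σ_H be the matrix indexed by the vertices of T_H with entries (Σ_H)_{σ,τ} = γ(d(σ,τ)); assume each Σ_H is positive definite. Then there exists a constant C > 0, depending only on the β_ℓ and λ_ℓ, such that (1^T Σ_H^{-1} 1)^{-1} ≤ C/n for all H. That is, the variance of the GLS estimator decays like O(n^{-1}). -/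

import Mathlib

open Matrix BigOperators

/-- The vertices of the complete binary tree of depth `H`:
binary strings of length at most `H`. -/
def CBTVertex (H : ℕ) : Type := {l : List Bool // l.length ≤ H}

instance (H : ℕ) : DecidableEq (CBTVertex H) := by
  unfold CBTVertex; infer_instance

noncomputable instance (H : ℕ) : Fintype (CBTVertex H) :=
  @Fintype.ofFinite _ ((List.finite_length_le Bool H).to_subtype)

/-- The complete binary tree of depth `H`: each string of length less than `H`
is joined by an edge to its two one-symbol extensions. -/
def completeBinaryTree (H : ℕ) : SimpleGraph (CBTVertex H) where
  Adj a b := (∃ x : Bool, b.val = x :: a.val) ∨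
             (∃ x : Bool, a.val = x :: b.val)
  symm := ⟨fun a b h => Or.symm h⟩
  loopless := ⟨fun a h => by
    rcases h with ⟨x, hx⟩ | ⟨x, hx⟩ <;> exact (List.cons_ne_self x _) hx.symm⟩

namespace CBTAux

/-- longest common prefix -/
def lcp : List Bool → List Bool → List Bool
  | a :: as, b :: bs => if a = b then a :: lcp as bs else []
  | _, _ => []

theorem lcp_prefix_left : ∀ l t : List Bool, lcp l t <+: l
  | [], _ => by simp [lcp]
  | a :: as, [] => by simp [lcp]
  | a :: as, b :: bs => by
    rw [lcp]
    split
    · exact List.cons_prefix_cons.mpr ⟨rfl, lcp_prefix_left as bs⟩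
    · simp

theorem lcp_prefix_right : ∀ l t : List Bool, lcp l t <+: t
  | [], _ => by simp [lcp]
  | a :: as, [] => by simp [lcp]
  | a :: as, b :: bs => by
    rw [lcp]
    split
    · rename_i h; subst h; exact List.cons_prefix_cons.mpr ⟨rfl, lcp_prefix_right as bs⟩
    · simp

theorem prefix_lcp : ∀ (s l t : List Bool), s <+: l → s <+: t → s <+: lcp l t
  | [], _, _, _, _ => by simp
  | c :: cs, l, t, hl, ht => by
    cases l with
    | nil => simp at hl
    | cons a as =>
      cases t with
      | nil => simp at ht
      | cons b bs =>
        rw [List.cons_prefix_cons] at hl ht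
        obtain ⟨rfl, hl⟩ := hl
        obtain ⟨rfl, ht⟩ := ht
        rw [lcp, if_pos rfl]
        exact List.cons_prefix_cons.mpr ⟨rfl, prefix_lcp cs _ _ hl ht⟩

/-- length of the longest common suffix -/
def csl (l t : List Bool) : ℕ := (lcp l.reverse t.reverse).length

theorem cs_suffix_left (l t : List Bool) : (lcp l.reverse t.reverse).reverse <:+ l := by
  rw [← List.reverse_prefix]
  simpa using lcp_prefix_left l.reverse t.reverse

theorem cs_suffix_right (l t : List Bool) : (lcp l.reverse t.reverse).reverse <:+ t := by
  rw [← List.reverse_prefix]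
  simpa using lcp_prefix_right l.reverse t.reverse

theorem cs_length (l t : List Bool) : (lcp l.reverse t.reverse).reverse.length = csl l t := by
  simp [csl]

theorem suffix_le_csl {s l t : List Bool} (hl : s <:+ l) (ht : s <:+ t) :
    s.length ≤ csl l t := by
  have h := prefix_lcp s.reverse l.reverse t.reverse
    (by rwa [List.reverse_prefix]) (by rwa [List.reverse_prefix])
  simpa [csl] using h.length_le

theorem csl_le_left (l t : List Bool) : csl l t ≤ l.length := by
  have := (cs_suffix_left l t).length_le
  rwa [cs_length] at this

theorem csl_le_right (l t : List Bool) : csl l t ≤ t.length := by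
  have := (cs_suffix_right l t).length_le
  rwa [cs_length] at this

theorem csl_self (l : List Bool) : csl l l = l.length :=
  le_antisymm (csl_le_left l l) (suffix_le_csl (List.suffix_refl l) (List.suffix_refl l))

theorem le_csl_cons (x : Bool) (a t : List Bool) : csl a t ≤ csl (x :: a) t := by
  have h1 := cs_suffix_left a t
  have h2 := cs_suffix_right a t
  have := suffix_le_csl (h1.trans (List.suffix_cons x a)) h2
  rwa [cs_length] at this

theorem csl_cons_le (x : Bool) (a t : List Bool) : csl (x :: a) t ≤ csl a t + 1 := by
  set s := (lcp (x :: a).reverse t.reverse).reverse with hs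
  have h1 : s <:+ (x :: a) := cs_suffix_left _ t
  have h2 : s <:+ t := cs_suffix_right _ t
  have hlen : s.length = csl (x :: a) t := cs_length _ t
  rcases Nat.lt_or_ge s.length (x :: a).length with h | h
  · have hsa : s <:+ a := by
      refine List.suffix_of_suffix_length_le h1 (List.suffix_cons x a) ?_
      simpa using Nat.lt_succ_iff.mp (by simpa using h)
    have := suffix_le_csl hsa h2
    omega
  · have : s = x :: a := h1.eq_of_length (le_antisymm h1.length_le h)
    rw [this] at hlen h2
    have hsa : a <:+ t := (List.suffix_cons x a).trans h2
    have h3 := suffix_le_csl (List.suffix_refl a) hsa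
    simp at hlen
    omega

/-- csl of suffixes is at most csl -/
theorem csl_drop_le (a b : ℕ) (u v : List Bool) : csl (u.drop a) (v.drop b) ≤ csl u v := by
  have h1 := cs_suffix_left (u.drop a) (v.drop b)
  have h2 := cs_suffix_right (u.drop a) (v.drop b)
  have := suffix_le_csl (h1.trans (List.drop_suffix a u)) (h2.trans (List.drop_suffix b v))
  rwa [cs_length] at this

theorem csl_drop_ge (a b : ℕ) (u v : List Bool)
    (ha : csl u v ≤ u.length - a) (hb : csl u v ≤ v.length - b) :
    csl u v ≤ csl (u.drop a) (v.drop b) := by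
  set s := (lcp u.reverse v.reverse).reverse with hs
  have h1 : s <:+ u := cs_suffix_left u v
  have h2 : s <:+ v := cs_suffix_right u v
  have hlen : s.length = csl u v := cs_length u v
  refine hlen ▸ suffix_le_csl ?_ ?_
  · exact List.suffix_of_suffix_length_le h1 (List.drop_suffix a u) (by simp [hlen]; omega)
  · exact List.suffix_of_suffix_length_le h2 (List.drop_suffix b v) (by simp [hlen]; omega)

end CBTAux

section Tree

variable {H : ℕ}

open CBTAux

/-- drop vertex -/
def dropVx (a : ℕ) (u : CBTVertex H) : CBTVertex H :=
  ⟨u.val.drop a, le_trans (by simpa using Nat.sub_le _ _) u.2⟩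

theorem exists_walk_append (H : ℕ) : ∀ (t s : List Bool) (h : (t ++ s).length ≤ H)
    (hs : s.length ≤ H),
    ∃ p : (completeBinaryTree H).Walk ⟨t ++ s, h⟩ ⟨s, hs⟩, p.length = t.length
  | [], s, h, hs => ⟨SimpleGraph.Walk.nil, rfl⟩
  | x :: t, s, h, hs => by
    have h' : (t ++ s).length ≤ H := by simp at h ⊢; omega
    obtain ⟨p, hp⟩ := exists_walk_append H t s h' hs
    exact ⟨SimpleGraph.Walk.cons
      (show (completeBinaryTree H).Adj ⟨x :: t ++ s, h⟩ ⟨t ++ s, h'⟩ from Or.inr ⟨x, rfl⟩) p,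
      by show p.length + 1 = _; rw [hp]; rfl⟩

theorem walk_lower {τ : CBTVertex H} : ∀ {σ : CBTVertex H}
    (p : (completeBinaryTree H).Walk σ τ),
    σ.val.length + τ.val.length ≤ p.length + 2 * csl σ.val τ.val := by
  intro σ p
  induction p with
  | nil => rw [csl_self]; omega
  | @cons σ b τ h p ih =>
    have hcons := SimpleGraph.Walk.length_cons h p
    rcases h with ⟨x, hx⟩ | ⟨x, hx⟩
    · have hlen : b.val.length = σ.val.length + 1 := by rw [hx]; simp
      have hcsl : csl b.val τ.val ≤ csl σ.val τ.val + 1 := by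
        rw [hx]; exact csl_cons_le x _ _
      omega
    · have hlen : σ.val.length = b.val.length + 1 := by rw [hx]; simp
      have hcsl : csl b.val τ.val ≤ csl σ.val τ.val := by
        conv_rhs => rw [hx]
        exact le_csl_cons x _ _
      omega

theorem dist_formula (σ τ : CBTVertex H) :
    (completeBinaryTree H).dist σ τ
      = (σ.val.length - csl σ.val τ.val) + (τ.val.length - csl σ.val τ.val) := by
  obtain ⟨sv, hsv⟩ := σ
  obtain ⟨tv, htv⟩ := τ
  obtain ⟨s, hslen, hs1, hs2⟩ : ∃ s : List Bool,
      s.length = csl sv tv ∧ s <:+ sv ∧ s <:+ tv :=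
    ⟨_, cs_length sv tv, cs_suffix_left sv tv, cs_suffix_right sv tv⟩
  have hsH : s.length ≤ H := le_trans hs1.length_le hsv
  obtain ⟨t1, ht1⟩ := hs1
  obtain ⟨t2, ht2⟩ := hs2
  subst ht1 ht2
  obtain ⟨p1, hp1⟩ := exists_walk_append H t1 s hsv hsH
  obtain ⟨p2, hp2⟩ := exists_walk_append H t2 s htv hsH
  have hub : (completeBinaryTree H).dist ⟨t1 ++ s, hsv⟩ ⟨t2 ++ s, htv⟩
      ≤ t1.length + t2.length := by
    have := SimpleGraph.dist_le (p1.append p2.reverse)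
    have hl := SimpleGraph.Walk.length_append p1 p2.reverse
    have hr := SimpleGraph.Walk.length_reverse p2
    omega
  have hreach : (completeBinaryTree H).Reachable ⟨t1 ++ s, hsv⟩ ⟨t2 ++ s, htv⟩ :=
    (p1.append p2.reverse).reachable
  obtain ⟨q, hq⟩ := hreach.exists_walk_length_eq_dist
  have hlb := walk_lower q
  rw [hq] at hlb
  have h1 : csl (t1 ++ s) (t2 ++ s) ≤ s.length + t1.length := by
    have := csl_le_left (t1 ++ s) (t2 ++ s); simp at this; omega
  have h2 : s.length ≤ csl (t1 ++ s) (t2 ++ s) :=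
    hslen ▸ suffix_le_csl (List.suffix_append t1 s) (List.suffix_append t2 s)
  simp only [List.length_append] at hlb ⊢
  omega

theorem csl_dropVx (u v : CBTVertex H) (a b : ℕ)
    (ha : csl u.val v.val + a ≤ u.val.length) (hb : csl u.val v.val + b ≤ v.val.length) :
    csl (dropVx a u).val (dropVx b v).val = csl u.val v.val := by
  refine le_antisymm (csl_drop_le a b u.val v.val) (csl_drop_ge a b u.val v.val ?_ ?_) <;> omega

theorem dist_dropVx (u v : CBTVertex H) (a b : ℕ)
    (ha : csl u.val v.val + a ≤ u.val.length) (hb : csl u.val v.val + b ≤ v.val.length) :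
    (completeBinaryTree H).dist (dropVx a u) (dropVx b v)
      = (u.val.length - a - csl u.val v.val) + (v.val.length - b - csl u.val v.val) := by
  rw [dist_formula, csl_dropVx u v a b ha hb]
  simp only [dropVx, List.length_drop]

end Tree

section Count

open CBTAux

variable {H : ℕ}

/-- leaves -/
noncomputable def Lv (H : ℕ) : Finset (CBTVertex H) := Finset.univ.filter (fun v => v.val.length = H)

theorem mem_Lv {v : CBTVertex H} : v ∈ Lv H ↔ v.val.length = H := by
  simp [Lv]

theorem card_Lv_ge (H : ℕ) : 2 ^ H ≤ (Lv H).card := by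
  have := Finset.card_le_card_of_injOn
    (f := fun g : Fin H → Bool => (⟨List.ofFn g, by simp⟩ : CBTVertex H))
    (s := Finset.univ) (t := Lv H)
    (fun g _ => mem_Lv.mpr (by simp))
    (fun g1 _ g2 _ h => List.ofFn_injective (congrArg Subtype.val h))
  simpa using this

theorem drop_eq_of_near {u v : CBTVertex H} (hu : u.val.length = H) (hv : v.val.length = H)
    (m' : ℕ) (h : H ≤ csl u.val v.val + m') :
    v.val.drop m' = u.val.drop m' := by
  have hlenv : (v.val.drop m').length = H - m' := by simp [hv]
  have hlenu : (u.val.drop m').length = H - m' := by simp [hu]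
  have hcsl1 := csl_le_left u.val v.val
  have hslen : (lcp u.val.reverse v.val.reverse).reverse.length = csl u.val v.val :=
    cs_length u.val v.val
  have hsv : v.val.drop m' <:+ (lcp u.val.reverse v.val.reverse).reverse :=
    List.suffix_of_suffix_length_le (List.drop_suffix m' v.val)
      (cs_suffix_right u.val v.val) (by omega)
  have h1 : v.val.drop m' <:+ u.val := hsv.trans (cs_suffix_left u.val v.val)
  exact (List.suffix_of_suffix_length_le h1 (List.drop_suffix m' u.val)
    (by omega)).eq_of_length (by omega)

theorem card_near_le {u : CBTVertex H} (hu : u.val.length = H) (c : ℕ) :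
    ((Lv H).filter (fun v => H ≤ csl u.val v.val + c)).card ≤ 2 ^ c := by
  set m' := min c H with hm'
  have hm'H : m' ≤ H := min_le_right _ _
  have hinj := Finset.card_le_card_of_injOn
    (f := fun v : CBTVertex H => fun i : Fin m' => v.val.getD i false)
    (s := (Lv H).filter (fun v => H ≤ csl u.val v.val + c))
    (t := Finset.univ)
    (fun v _ => Finset.mem_univ _) ?_
  · calc ((Lv H).filter (fun v => H ≤ csl u.val v.val + c)).card
        ≤ (Finset.univ : Finset (Fin m' → Bool)).card := hinj
      _ = 2 ^ m' := by simp
      _ ≤ 2 ^ c := Nat.pow_le_pow_right (by norm_num) (min_le_left _ _)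
  · intro v1 hv1 v2 hv2 heq
    simp only [Finset.coe_filter, Set.mem_setOf_eq, mem_Lv] at hv1 hv2
    obtain ⟨hv1L, hv1n⟩ := hv1
    obtain ⟨hv2L, hv2n⟩ := hv2
    have hd1 : v1.val.drop m' = u.val.drop m' :=
      drop_eq_of_near hu hv1L m' (by omega)
    have hd2 : v2.val.drop m' = u.val.drop m' :=
      drop_eq_of_near hu hv2L m' (by omega)
    have hd : v1.val.drop m' = v2.val.drop m' := hd1.trans hd2.symm
    refine Subtype.ext (List.ext_getElem (by omega) ?_)
    intro i hi1 hi2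
    rcases Nat.lt_or_ge i m' with hlt | hge
    · have h0 : v1.val.getD i false = v2.val.getD i false := congrFun heq ⟨i, hlt⟩
      rwa [List.getD_eq_getElem _ _ hi1, List.getD_eq_getElem _ _ hi2] at h0
    · have e1 : v1.val[i] = (v1.val.drop m')[i - m']'(by simp; omega) := by
        simp only [List.getElem_drop]
        congr 1
        omega
      have e2 : v2.val[i] = (v2.val.drop m')[i - m']'(by simp; omega) := by
        simp only [List.getElem_drop]
        congr 1
        omega
      rw [e1, e2]
      congr 1

end Count

section Algebra

open CBTAux Matrix

theorem sum_coef_pow (n : ℕ) (lam : Fin n → ℝ) (x : ℝ) :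
    ∑ A : Finset (Fin n), (∏ ℓ ∈ A, (-lam ℓ)) * x ^ (n - A.card) = ∏ ℓ, (x - lam ℓ) := by
  have h := Fintype.prod_add (fun ℓ : Fin n => -lam ℓ) (fun _ : Fin n => x)
  calc ∑ A : Finset (Fin n), (∏ ℓ ∈ A, (-lam ℓ)) * x ^ (n - A.card)
      = ∑ A : Finset (Fin n), (∏ ℓ ∈ A, (-lam ℓ)) * ∏ _ℓ ∈ Aᶜ, x := by
        refine Finset.sum_congr rfl fun A _ => ?_
        rw [Finset.prod_const, Finset.card_compl]
        simp
    _ = ∏ ℓ, (-lam ℓ + x) := h.symm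
    _ = ∏ ℓ, (x - lam ℓ) := Finset.prod_congr rfl fun ℓ _ => by ring

variable {K : ℕ} (β lam : Fin (K - 1) → ℝ) (H : ℕ)

/-- coefficient of the product polynomial -/
def coefP (lam : Fin (K - 1) → ℝ) (A : Finset (Fin (K - 1))) : ℝ := ∏ ℓ ∈ A, (-lam ℓ)

/-- the inner double sum over subsets for a pair of leaves -/
noncomputable def Tpair (u v : CBTVertex H) : ℝ :=
  ∑ A : Finset (Fin (K - 1)), ∑ B : Finset (Fin (K - 1)),
    coefP lam A * coefP lam B *
      (∑ ℓ, β ℓ ^ 2 *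
        lam ℓ ^ ((completeBinaryTree H).dist (dropVx A.card u) (dropVx B.card v)))

theorem Tpair_far_eq_zero {u v : CBTVertex H}
    (hu : u.val.length = H) (hv : v.val.length = H)
    (hfar : csl u.val v.val + (K - 1) ≤ H) :
    Tpair β lam H u v = 0 := by
  set m := csl u.val v.val with hm
  have hcard : ∀ A : Finset (Fin (K - 1)), A.card ≤ K - 1 := fun A => by
    simpa using Finset.card_le_univ A
  have hdist : ∀ A B : Finset (Fin (K - 1)),
      (completeBinaryTree H).dist (dropVx A.card u) (dropVx B.card v)
        = (H - A.card - m) + (H - B.card - m) := by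
    intro A B
    rw [dist_dropVx u v A.card B.card (by have := hcard A; omega) (by have := hcard B; omega)]
    rw [hu, hv]
  have hkey : ∀ ℓ : Fin (K - 1),
      ∑ A : Finset (Fin (K - 1)), coefP lam A * lam ℓ ^ (H - A.card - m) = 0 := by
    intro ℓ
    have hsplit : ∀ A : Finset (Fin (K - 1)),
        H - A.card - m = (H - (K - 1) - m) + ((K - 1) - A.card) := fun A => by
      have := hcard A; omega
    calc ∑ A : Finset (Fin (K - 1)), coefP lam A * lam ℓ ^ (H - A.card - m)
        = lam ℓ ^ (H - (K - 1) - m) *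
            ∑ A : Finset (Fin (K - 1)), coefP lam A * lam ℓ ^ ((K - 1) - A.card) := by
          rw [Finset.mul_sum]
          refine Finset.sum_congr rfl fun A _ => ?_
          rw [hsplit A, pow_add]; ring
      _ = lam ℓ ^ (H - (K - 1) - m) * ∏ ℓ', (lam ℓ - lam ℓ') := by
          simp only [coefP]
          rw [sum_coef_pow (K - 1) lam (lam ℓ)]
      _ = 0 := by
          have hz : (∏ ℓ' : Fin (K - 1), (lam ℓ - lam ℓ')) = 0 :=
            Finset.prod_eq_zero (Finset.mem_univ ℓ) (sub_self _)
          rw [hz, mul_zero]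
  calc Tpair β lam H u v
      = ∑ A : Finset (Fin (K - 1)), ∑ B : Finset (Fin (K - 1)), ∑ ℓ,
          β ℓ ^ 2 * ((coefP lam A * lam ℓ ^ (H - A.card - m)) *
            (coefP lam B * lam ℓ ^ (H - B.card - m))) := by
        refine Finset.sum_congr rfl fun A _ => Finset.sum_congr rfl fun B _ => ?_
        rw [Finset.mul_sum]
        refine Finset.sum_congr rfl fun ℓ _ => ?_
        rw [hdist A B, pow_add]; ring
    _ = ∑ A : Finset (Fin (K - 1)), ∑ ℓ, ∑ B : Finset (Fin (K - 1)),
          β ℓ ^ 2 * ((coefP lam A * lam ℓ ^ (H - A.card - m)) *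
            (coefP lam B * lam ℓ ^ (H - B.card - m))) :=
        Finset.sum_congr rfl fun A _ => Finset.sum_comm
    _ = ∑ ℓ, ∑ A : Finset (Fin (K - 1)), ∑ B : Finset (Fin (K - 1)),
          β ℓ ^ 2 * ((coefP lam A * lam ℓ ^ (H - A.card - m)) *
            (coefP lam B * lam ℓ ^ (H - B.card - m))) := Finset.sum_comm
    _ = ∑ ℓ, β ℓ ^ 2 *
          ((∑ A : Finset (Fin (K - 1)), coefP lam A * lam ℓ ^ (H - A.card - m)) *
           (∑ B : Finset (Fin (K - 1)), coefP lam B * lam ℓ ^ (H - B.card - m))) := by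
        refine Finset.sum_congr rfl fun ℓ _ => ?_
        rw [Finset.sum_mul_sum, Finset.mul_sum]
        refine Finset.sum_congr rfl fun A _ => ?_
        rw [Finset.mul_sum]
    _ = 0 := by
        refine Finset.sum_eq_zero fun ℓ _ => ?_
        rw [hkey ℓ, zero_mul, mul_zero]

theorem abs_coefP_le_one (hlam : ∀ ℓ, lam ℓ ∈ Set.Ioo (-1 : ℝ) 1)
    (A : Finset (Fin (K - 1))) : |coefP lam A| ≤ 1 := by
  rw [coefP, Finset.abs_prod]
  refine Finset.prod_le_one (fun ℓ _ => abs_nonneg _) fun ℓ _ => ?_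
  rw [abs_neg]
  exact le_of_lt (abs_lt.mpr ⟨(hlam ℓ).1, (hlam ℓ).2⟩)

theorem abs_Tpair_le (hlam : ∀ ℓ, lam ℓ ∈ Set.Ioo (-1 : ℝ) 1) (u v : CBTVertex H) :
    |Tpair β lam H u v| ≤ (∑ ℓ, β ℓ ^ 2) * (2 ^ (K - 1) * 2 ^ (K - 1)) := by
  have habs : ∀ ℓ (d : ℕ), |lam ℓ ^ d| ≤ 1 := fun ℓ d => by
    rw [abs_pow]
    exact pow_le_one₀ (abs_nonneg _) (le_of_lt (abs_lt.mpr ⟨(hlam ℓ).1, (hlam ℓ).2⟩))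
  have hinner : ∀ (d : Fin (K-1) → ℕ), |∑ ℓ, β ℓ ^ 2 * lam ℓ ^ (d ℓ)| ≤ ∑ ℓ, β ℓ ^ 2 := by
    intro d
    refine le_trans (Finset.abs_sum_le_sum_abs _ _) (Finset.sum_le_sum fun ℓ _ => ?_)
    rw [abs_mul, abs_pow, sq_abs, abs_pow]
    calc β ℓ ^ 2 * |lam ℓ| ^ (d ℓ) ≤ β ℓ ^ 2 * 1 :=
          mul_le_mul_of_nonneg_left (by rw [← abs_pow]; exact habs ℓ _) (sq_nonneg _)
      _ = β ℓ ^ 2 := mul_one _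
  have hterm : ∀ (A B : Finset (Fin (K - 1))),
      |coefP lam A * coefP lam B *
        (∑ ℓ, β ℓ ^ 2 *
          lam ℓ ^ ((completeBinaryTree H).dist (dropVx A.card u) (dropVx B.card v)))|
        ≤ ∑ ℓ, β ℓ ^ 2 := by
    intro A B
    rw [abs_mul, abs_mul]
    have h1 := abs_coefP_le_one lam hlam A
    have h2 := abs_coefP_le_one lam hlam B
    have h3 := hinner (fun ℓ => (completeBinaryTree H).dist (dropVx A.card u) (dropVx B.card v))
    have hn : (0:ℝ) ≤ ∑ ℓ, β ℓ ^ 2 := Finset.sum_nonneg fun ℓ _ => sq_nonneg _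
    have h12 : |coefP lam A| * |coefP lam B| ≤ 1 :=
      mul_le_one₀ h1 (abs_nonneg _) h2
    calc |coefP lam A| * |coefP lam B| *
        |∑ ℓ, β ℓ ^ 2 *
          lam ℓ ^ ((completeBinaryTree H).dist (dropVx A.card u) (dropVx B.card v))|
        ≤ 1 * (∑ ℓ, β ℓ ^ 2) :=
          mul_le_mul h12 h3 (abs_nonneg _) zero_le_one
      _ = ∑ ℓ, β ℓ ^ 2 := one_mul _
  calc |Tpair β lam H u v|
      ≤ ∑ A : Finset (Fin (K - 1)), ∑ B : Finset (Fin (K - 1)), (∑ ℓ, β ℓ ^ 2) := by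
        refine le_trans (Finset.abs_sum_le_sum_abs _ _) (Finset.sum_le_sum fun A _ => ?_)
        exact le_trans (Finset.abs_sum_le_sum_abs _ _) (Finset.sum_le_sum fun B _ => hterm A B)
    _ = (∑ ℓ, β ℓ ^ 2) * (2 ^ (K - 1) * 2 ^ (K - 1)) := by
        rw [Finset.sum_const, Finset.sum_const]
        simp [Finset.card_univ, mul_comm, mul_assoc]

end Algebra

section Quad

open CBTAux Matrix

theorem exists_good_w (K : ℕ) (hK : 2 ≤ K) (β lam : Fin (K - 1) → ℝ)
    (hlam : ∀ ℓ, lam ℓ ∈ Set.Ioo (-1 : ℝ) 1) (H : ℕ) :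
    ∃ w : CBTVertex H → ℝ,
      w ⬝ᵥ (fun _ => (1:ℝ)) = 1 ∧
      w ⬝ᵥ ((Matrix.of fun σ τ : CBTVertex H =>
          ∑ ℓ, β ℓ ^ 2 * lam ℓ ^ ((completeBinaryTree H).dist σ τ)) *ᵥ w)
        ≤ ((∑ ℓ, β ℓ ^ 2) * (2 ^ (K - 2) * (2 ^ (K - 1) * 2 ^ (K - 1))) *
            ((∏ ℓ, (1 - lam ℓ))⁻¹) ^ 2) / 2 ^ H := by
  classical
  set M : Matrix (CBTVertex H) (CBTVertex H) ℝ :=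
    Matrix.of fun σ τ : CBTVertex H =>
      ∑ ℓ, β ℓ ^ 2 * lam ℓ ^ ((completeBinaryTree H).dist σ τ) with hM
  set p1 : ℝ := ∏ ℓ, (1 - lam ℓ) with hp1def
  have hp1 : 0 < p1 := Finset.prod_pos fun ℓ _ => by have := (hlam ℓ).2; linarith
  set L : ℕ := (Lv H).card with hLdef
  have hL : 2 ^ H ≤ L := card_Lv_ge H
  have hL0 : (0:ℝ) < L := by
    have : (0:ℕ) < L := lt_of_lt_of_le (Nat.pow_pos (by norm_num)) hL
    exact_mod_cast this
  set c0 : ℝ := ((L : ℝ) * p1)⁻¹ with hc0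
  have hc0pos : 0 < c0 := by positivity
  set w0 : CBTVertex H → ℝ := fun σ =>
    ∑ u ∈ Lv H, ∑ A : Finset (Fin (K - 1)),
      coefP lam A * (if σ = dropVx A.card u then 1 else 0) with hw0
  set w : CBTVertex H → ℝ := fun σ => c0 * w0 σ with hw
  have hsum : ∀ g : CBTVertex H → ℝ,
      (∑ σ, w0 σ * g σ) = ∑ u ∈ Lv H, ∑ A : Finset (Fin (K - 1)),
        coefP lam A * g (dropVx A.card u) := by
    intro g
    calc ∑ σ, w0 σ * g σ
        = ∑ σ, ∑ u ∈ Lv H, ∑ A : Finset (Fin (K - 1)),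
            coefP lam A * (if σ = dropVx A.card u then g σ else 0) := by
          refine Finset.sum_congr rfl fun σ _ => ?_
          rw [hw0]
          simp only [Finset.sum_mul, mul_ite, mul_one, mul_zero, ite_mul, zero_mul]
      _ = ∑ u ∈ Lv H, ∑ σ, ∑ A : Finset (Fin (K - 1)),
            coefP lam A * (if σ = dropVx A.card u then g σ else 0) := Finset.sum_comm
      _ = ∑ u ∈ Lv H, ∑ A : Finset (Fin (K - 1)), ∑ σ,
            coefP lam A * (if σ = dropVx A.card u then g σ else 0) :=
          Finset.sum_congr rfl fun u _ => Finset.sum_comm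
      _ = ∑ u ∈ Lv H, ∑ A : Finset (Fin (K - 1)),
            coefP lam A * g (dropVx A.card u) := by
          refine Finset.sum_congr rfl fun u _ => Finset.sum_congr rfl fun A _ => ?_
          rw [← Finset.mul_sum]
          congr 1
          rw [Finset.sum_ite_eq' Finset.univ (dropVx A.card u) g]
          simp
  have hcoefsum : (∑ A : Finset (Fin (K - 1)), coefP lam A) = p1 := by
    have := sum_coef_pow (K - 1) lam 1
    simp only [one_pow, mul_one] at this
    simp only [coefP, hp1def]
    exact this
  have hone : w ⬝ᵥ (fun _ => (1:ℝ)) = 1 := by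
    show (∑ σ, (c0 * w0 σ) * 1) = 1
    have : (∑ σ, w0 σ * 1) = (L : ℝ) * p1 := by
      rw [hsum (fun _ => 1)]
      simp only [mul_one, hcoefsum]
      rw [Finset.sum_const, nsmul_eq_mul]
    calc (∑ σ, (c0 * w0 σ) * 1)
        = c0 * ∑ σ, w0 σ * 1 := by rw [Finset.mul_sum]; exact Finset.sum_congr rfl fun σ _ => by ring
      _ = c0 * ((L : ℝ) * p1) := by rw [this]
      _ = 1 := by rw [hc0]; field_simp
  refine ⟨w, hone, ?_⟩
  have hMxw : ∀ x : CBTVertex H, (M *ᵥ w0) x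
      = ∑ v ∈ Lv H, ∑ B : Finset (Fin (K - 1)), coefP lam B * M x (dropVx B.card v) := by
    intro x
    have h := hsum (fun τ => M x τ)
    rw [← h]
    simp only [Matrix.mulVec, dotProduct]
    exact Finset.sum_congr rfl fun τ _ => mul_comm _ _
  have hquad : w ⬝ᵥ (M *ᵥ w) = c0 ^ 2 * ∑ u ∈ Lv H, ∑ v ∈ Lv H, Tpair β lam H u v := by
    have hmv : M *ᵥ w = fun x => c0 * (M *ᵥ w0) x := by
      funext x
      simp only [hw, Matrix.mulVec, dotProduct, Finset.mul_sum]
      exact Finset.sum_congr rfl fun τ _ => by ring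
    calc w ⬝ᵥ (M *ᵥ w)
        = c0 ^ 2 * ∑ σ, w0 σ * (M *ᵥ w0) σ := by
          rw [hmv]
          show (∑ σ, (c0 * w0 σ) * (c0 * (M *ᵥ w0) σ)) = _
          rw [Finset.mul_sum]
          exact Finset.sum_congr rfl fun σ _ => by ring
      _ = c0 ^ 2 * ∑ u ∈ Lv H, ∑ A : Finset (Fin (K - 1)),
            coefP lam A * (M *ᵥ w0) (dropVx A.card u) := by rw [hsum]
      _ = c0 ^ 2 * ∑ u ∈ Lv H, ∑ v ∈ Lv H, Tpair β lam H u v := by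
          congr 1
          refine Finset.sum_congr rfl fun u _ => ?_
          calc ∑ A : Finset (Fin (K - 1)), coefP lam A * (M *ᵥ w0) (dropVx A.card u)
              = ∑ A : Finset (Fin (K - 1)), ∑ v ∈ Lv H, ∑ B : Finset (Fin (K - 1)),
                  coefP lam A * coefP lam B * M (dropVx A.card u) (dropVx B.card v) := by
                refine Finset.sum_congr rfl fun A _ => ?_
                rw [hMxw, Finset.mul_sum]
                refine Finset.sum_congr rfl fun v _ => ?_
                rw [Finset.mul_sum]
                exact Finset.sum_congr rfl fun B _ => by ring
            _ = ∑ v ∈ Lv H, ∑ A : Finset (Fin (K - 1)), ∑ B : Finset (Fin (K - 1)),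
                  coefP lam A * coefP lam B * M (dropVx A.card u) (dropVx B.card v) :=
                Finset.sum_comm
            _ = ∑ v ∈ Lv H, Tpair β lam H u v := by
                refine Finset.sum_congr rfl fun v _ => ?_
                rw [Tpair]
                rfl
  rw [hquad]
  -- now bound the double sum
  set c := K - 2 with hc
  have hKc : K - 1 = c + 1 := by omega
  have hfar_zero : ∀ u ∈ Lv H, ∀ v ∈ Lv H, ¬ (H ≤ csl u.val v.val + c) →
      Tpair β lam H u v = 0 := by
    intro u hu v hv hnear
    exact Tpair_far_eq_zero β lam H (mem_Lv.mp hu) (mem_Lv.mp hv) (by omega)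
  have hrow : ∀ u ∈ Lv H, |∑ v ∈ Lv H, Tpair β lam H u v|
      ≤ (2:ℝ) ^ c * ((∑ ℓ, β ℓ ^ 2) * (2 ^ (K - 1) * 2 ^ (K - 1))) := by
    intro u hu
    have hsplit := Finset.sum_filter_add_sum_filter_not (Lv H)
      (fun v => H ≤ csl u.val v.val + c) (fun v => Tpair β lam H u v)
    have hzero : ∑ v ∈ (Lv H).filter (fun v => ¬ (H ≤ csl u.val v.val + c)),
        Tpair β lam H u v = 0 := by
      refine Finset.sum_eq_zero fun v hv => ?_
      rw [Finset.mem_filter] at hv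
      exact hfar_zero u hu v hv.1 hv.2
    have heq : ∑ v ∈ Lv H, Tpair β lam H u v
        = ∑ v ∈ (Lv H).filter (fun v => H ≤ csl u.val v.val + c), Tpair β lam H u v := by
      rw [← hsplit, hzero, add_zero]
    rw [heq]
    calc |∑ v ∈ (Lv H).filter (fun v => H ≤ csl u.val v.val + c), Tpair β lam H u v|
        ≤ ∑ v ∈ (Lv H).filter (fun v => H ≤ csl u.val v.val + c),
            ((∑ ℓ, β ℓ ^ 2) * (2 ^ (K - 1) * 2 ^ (K - 1))) := by
          refine le_trans (Finset.abs_sum_le_sum_abs _ _) (Finset.sum_le_sum fun v _ => ?_)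
          exact abs_Tpair_le β lam H hlam u v
      _ ≤ (2:ℝ) ^ c * ((∑ ℓ, β ℓ ^ 2) * (2 ^ (K - 1) * 2 ^ (K - 1))) := by
          rw [Finset.sum_const, nsmul_eq_mul]
          refine mul_le_mul_of_nonneg_right ?_ (by positivity)
          have := card_near_le (mem_Lv.mp hu) c
          exact_mod_cast this
  -- combine
  have hLp : (0:ℝ) < (2:ℝ) ^ H := by positivity
  have hL2 : (2:ℝ) ^ H ≤ (L:ℝ) := by exact_mod_cast hL
  set S := ∑ u ∈ Lv H, ∑ v ∈ Lv H, Tpair β lam H u v with hS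
  set B0 : ℝ := (2:ℝ) ^ c * ((∑ ℓ, β ℓ ^ 2) * (2 ^ (K - 1) * 2 ^ (K - 1))) with hB0
  have hB0nn : 0 ≤ B0 := by
    have : (0:ℝ) ≤ ∑ ℓ, β ℓ ^ 2 := Finset.sum_nonneg fun ℓ _ => sq_nonneg _
    positivity
  have hSbound : S ≤ (L:ℝ) * B0 := by
    calc S ≤ |S| := le_abs_self S
      _ ≤ ∑ u ∈ Lv H, |∑ v ∈ Lv H, Tpair β lam H u v| := Finset.abs_sum_le_sum_abs _ _
      _ ≤ ∑ u ∈ Lv H, B0 := Finset.sum_le_sum hrow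
      _ = (L:ℝ) * B0 := by rw [Finset.sum_const, nsmul_eq_mul]
  calc c0 ^ 2 * S ≤ c0 ^ 2 * ((L:ℝ) * B0) := by
        refine mul_le_mul_of_nonneg_left hSbound (by positivity)
    _ = B0 * (p1⁻¹)^2 / L := by
        rw [hc0]
        field_simp
    _ ≤ B0 * (p1⁻¹)^2 / 2 ^ H := by
        refine div_le_div_of_nonneg_left (by positivity) hLp hL2
    _ = ((∑ ℓ, β ℓ ^ 2) * (2 ^ (K - 2) * (2 ^ (K - 1) * 2 ^ (K - 1))) *
          ((∏ ℓ, (1 - lam ℓ))⁻¹) ^ 2) / 2 ^ H := by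
        rw [hB0, hc, hp1def]
        ring

end Quad

/-- Fix `K ≥ 2`, reals `β_2,…,β_K` and `λ_2,…,λ_K ∈ (-1,1)`, and set
`γ(d) = Σ_ℓ β_ℓ² λ_ℓ^d`.  For each depth `H ≥ 1`, let `Σ_H` be the matrix
indexed by the vertices of the complete binary tree of depth `H`
(`n = 2^{H+1} − 1` vertices) with entries `γ(d(σ,τ))`; assume each `Σ_H` is
positive definite.  Then there is a constant `C > 0` (depending only on the
`β_ℓ` and `λ_ℓ`) with `(1ᵀ Σ_H⁻¹ 1)⁻¹ ≤ C/n` for all such `H`: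
the variance of the GLS estimator decays like `O(n⁻¹)`. -/
theorem gls_variance_O_inverse_n (K : ℕ) (hK : 2 ≤ K)
    (β lam : Fin (K - 1) → ℝ) (hlam : ∀ ℓ, lam ℓ ∈ Set.Ioo (-1 : ℝ) 1)
    (hPD : ∀ H : ℕ, 1 ≤ H →
      (Matrix.of fun σ τ : CBTVertex H =>
        ∑ ℓ, β ℓ ^ 2 * lam ℓ ^ ((completeBinaryTree H).dist σ τ)).PosDef) :
    ∃ C > (0 : ℝ), ∀ H : ℕ, 1 ≤ H →
      ((fun _ => (1 : ℝ)) ⬝ᵥ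
        ((Matrix.of fun σ τ : CBTVertex H =>
            ∑ ℓ, β ℓ ^ 2 * lam ℓ ^ ((completeBinaryTree H).dist σ τ))⁻¹
          *ᵥ fun _ => (1 : ℝ)))⁻¹
        ≤ C / ((2 : ℝ) ^ (H + 1) - 1) := by
  classical
  set B : ℝ := (∑ ℓ, β ℓ ^ 2) * (2 ^ (K - 2) * (2 ^ (K - 1) * 2 ^ (K - 1))) *
      ((∏ ℓ, (1 - lam ℓ))⁻¹) ^ 2 with hB
  have hBnn : 0 ≤ B := by
    have h1 : (0:ℝ) ≤ ∑ ℓ, β ℓ ^ 2 := Finset.sum_nonneg fun ℓ _ => sq_nonneg _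
    positivity
  refine ⟨2 * B + 1, by linarith, ?_⟩
  intro H hH
  set M : Matrix (CBTVertex H) (CBTVertex H) ℝ :=
    Matrix.of fun σ τ : CBTVertex H =>
      ∑ ℓ, β ℓ ^ 2 * lam ℓ ^ ((completeBinaryTree H).dist σ τ) with hM
  have hpd : M.PosDef := hPD H hH
  obtain ⟨w, hone, hbound⟩ := exists_good_w K hK β lam hlam H
  set z : CBTVertex H → ℝ := M⁻¹ *ᵥ (fun _ => (1:ℝ)) with hzdef
  set t : ℝ := (fun _ => (1:ℝ)) ⬝ᵥ z with ht
  have hMinv : M * M⁻¹ = 1 := Matrix.mul_nonsing_inv _ hpd.det_pos.ne'.isUnit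
  have hz : M *ᵥ z = fun _ => (1:ℝ) := by
    rw [hzdef, Matrix.mulVec_mulVec, hMinv, Matrix.one_mulVec]
  have hones_ne : (fun _ : CBTVertex H => (1:ℝ)) ≠ 0 := by
    intro h
    have := congrFun h ⟨[], by simp⟩
    exact one_ne_zero this
  have htpos : 0 < t := by
    have hinv : (M⁻¹).PosDef := hpd.inv
    have := hinv.dotProduct_mulVec_pos hones_ne
    simpa [ht, hzdef] using this
  have hMsymm : Mᵀ = M := by
    have := hpd.1
    rwa [Matrix.IsHermitian, Matrix.conjTranspose_eq_transpose_of_trivial] at this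
  have hswap : ∀ x y : CBTVertex H → ℝ, x ⬝ᵥ (M *ᵥ y) = y ⬝ᵥ (M *ᵥ x) := by
    intro x y
    rw [Matrix.dotProduct_mulVec, ← Matrix.vecMul_transpose, hMsymm, dotProduct_comm]
  set q : ℝ := w ⬝ᵥ (M *ᵥ w) with hq
  have hwMz : w ⬝ᵥ (M *ᵥ z) = 1 := by rw [hz]; exact hone
  have hzMz : z ⬝ᵥ (M *ᵥ z) = t := by
    rw [hz, ht, dotProduct_comm]
  have hexpand : (w - t⁻¹ • z) ⬝ᵥ (M *ᵥ (w - t⁻¹ • z))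
      = q - t⁻¹ * (w ⬝ᵥ (M *ᵥ z)) - t⁻¹ * (z ⬝ᵥ (M *ᵥ w)) + (t⁻¹)^2 * (z ⬝ᵥ (M *ᵥ z)) := by
    simp [Matrix.mulVec_sub, Matrix.mulVec_smul, dotProduct_sub, sub_dotProduct,
      dotProduct_smul, smul_dotProduct, hq]
    ring
  have hpsd : 0 ≤ (w - t⁻¹ • z) ⬝ᵥ (M *ᵥ (w - t⁻¹ • z)) := by
    have := hpd.posSemidef.dotProduct_mulVec_nonneg (w - t⁻¹ • z)
    simpa using this
  have hzMw : z ⬝ᵥ (M *ᵥ w) = 1 := by rw [hswap]; exact hwMz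
  rw [hexpand, hwMz, hzMz, hzMw] at hpsd
  have htinv : (t⁻¹)^2 * t = t⁻¹ := by
    field_simp
  rw [htinv] at hpsd
  have hkey : t⁻¹ ≤ q := by linarith
  -- final chain
  have hden : (0:ℝ) < 2 ^ (H + 1) - 1 := by
    have h2 : (2:ℝ) = 2 ^ 1 := (pow_one 2).symm
    have : (2:ℝ) ^ 1 ≤ 2 ^ (H + 1) := pow_le_pow_right₀ one_le_two (by omega)
    rw [← h2] at this
    linarith
  have hq2 : q ≤ 2 * B / 2 ^ (H + 1) := by
    have : (2:ℝ) ^ (H + 1) = 2 * 2 ^ H := by rw [pow_succ]; ring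
    rw [this]
    calc q ≤ B / 2 ^ H := hbound
      _ = 2 * B / (2 * 2 ^ H) := by
        rw [mul_div_mul_left]
        norm_num
  have hfinal : 2 * B / 2 ^ (H + 1) ≤ (2 * B + 1) / (2 ^ (H + 1) - 1) := by
    refine div_le_div₀ (by linarith) (by linarith) hden (by linarith)
  calc t⁻¹ ≤ q := hkey
    _ ≤ 2 * B / 2 ^ (H + 1) := hq2
    _ ≤ (2 * B + 1) / (2 ^ (H + 1) - 1) := hfinal
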